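/- Let G = (V, A, c) be a finite weighted directed graph with no negative cycles and let B > 0. If some s–t path is traversable from a full battery of capacity B (i.e., δ_B(s, t) < ∞), then the minimum δ_B(s, t) is attained by a simple s–t path; in particular δ_B(s, t) equals the minimum of d_B(P') over simple s–t paths P'. -/
import Mathlib


open scoped Classical

/-- The clamped addition `x ⊕_B y = [x + y]₀ᴮ` on `ℝ ∪ {∞}` (modeled inside `EReal`;
inputs are never `⊥`). -/
noncomputable def eplus (B : ℝ) (x y : EReal) : EReal :=
  if x + y < 0 then 0 else if x + y ≤ (B : EReal) then x + y else ⊤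

/-- `batt B b cst i` is the charge `b_i` of the battery after traversing the first `i`
arcs of a path whose `i`-th arc (0-indexed) has cost `cst i`, starting from charge `b`. -/
noncomputable def batt (B b : ℝ) (cst : ℕ → ℝ) : ℕ → ℝ
  | 0 => b
  | i + 1 => min (batt B b cst i - cst i) B

/-- The path with arc costs `cst 0, …, cst (k-1)` is traversable from initial charge `b`. -/
def Trav (B b : ℝ) (cst : ℕ → ℝ) (k : ℕ) : Prop :=
  ∀ i, i < k → cst i ≤ batt B b cst i

/-- The energetic cost `d_{B,b}(P) = b - b_k` of a path with arc costs
`cst 0, …, cst (k-1)`, or `∞` if not traversable from initial charge `b`. -/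
noncomputable def dE (B b : ℝ) (cst : ℕ → ℝ) (k : ℕ) : EReal :=
  if Trav B b cst k then ((b - batt B b cst k : ℝ) : EReal) else ⊤

/-- `u 0, u 1, …, u k` is a path in the graph with arc relation `Arc`. -/
def IsPath {V : Type*} (Arc : V → V → Prop) (u : ℕ → V) (k : ℕ) : Prop :=
  ∀ i, i < k → Arc (u i) (u (i + 1))

/-- The energetic cost `δ_{B,b}(s,t)`: the minimum of `d_{B,b}(P)` over all `s`–`t`
paths `P` (`∞` if there is none). -/
noncomputable def deltaE {V : Type*} (Arc : V → V → Prop) (c : V → V → ℝ)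
    (B b : ℝ) (s t : V) : EReal :=
  sInf { x : EReal | ∃ (u : ℕ → V) (k : ℕ), IsPath Arc u k ∧ u 0 = s ∧ u k = t ∧
    x = dE B b (fun i => c (u i) (u (i + 1))) k }

/-- The standard distance `δ(s,t)`: the infimum of total costs of `s`–`t` paths. -/
noncomputable def distE {V : Type*} (Arc : V → V → Prop) (c : V → V → ℝ)
    (s t : V) : EReal :=
  sInf { x : EReal | ∃ (u : ℕ → V) (k : ℕ), IsPath Arc u k ∧ u 0 = s ∧ u k = t ∧
    x = ((∑ i ∈ Finset.range k, c (u i) (u (i + 1)) : ℝ) : EReal) }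

/-- The graph has no negative cycles. -/
def NoNegCycles {V : Type*} (Arc : V → V → Prop) (c : V → V → ℝ) : Prop :=
  ∀ (u : ℕ → V) (k : ℕ), IsPath Arc u k → u k = u 0 → 1 ≤ k →
    0 ≤ ∑ i ∈ Finset.range k, c (u i) (u (i + 1))

lemma batt_congr (B b : ℝ) {c1 c2 : ℕ → ℝ} {k : ℕ} (h : ∀ i, i < k → c1 i = c2 i) :
    ∀ n, n ≤ k → batt B b c1 n = batt B b c2 n := by
  intro n
  induction n with
  | zero => intro _; rfl
  | succ n ih =>
    intro hn
    show min (batt B b c1 n - c1 n) B = min (batt B b c2 n - c2 n) B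
    rw [ih (by omega), h n (by omega)]

lemma trav_congr (B b : ℝ) {c1 c2 : ℕ → ℝ} {k : ℕ} (h : ∀ i, i < k → c1 i = c2 i)
    (ht : Trav B b c1 k) : Trav B b c2 k := by
  intro i hi
  rw [← h i hi, ← batt_congr B b h i (le_of_lt hi)]
  exact ht i hi

lemma dE_congr (B b : ℝ) {c1 c2 : ℕ → ℝ} {k : ℕ} (h : ∀ i, i < k → c1 i = c2 i) :
    dE B b c1 k = dE B b c2 k := by
  unfold dE
  by_cases ht : Trav B b c1 k
  · rw [if_pos ht, if_pos (trav_congr B b h ht), batt_congr B b h k le_rfl]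
  · rw [if_neg ht, if_neg (fun ht2 => ht (trav_congr B b (fun i hi => (h i hi).symm) ht2))]

lemma batt_mono (B : ℝ) (cst : ℕ → ℝ) {b b' : ℝ} (h : b ≤ b') :
    ∀ n, batt B b cst n ≤ batt B b' cst n := by
  intro n
  induction n with
  | zero => exact h
  | succ n ih =>
    show min (batt B b cst n - cst n) B ≤ min (batt B b' cst n - cst n) B
    exact min_le_min (by linarith) le_rfl

lemma batt_shift (B b : ℝ) (cst : ℕ → ℝ) (i : ℕ) :
    ∀ n, batt B b cst (i + n) = batt B (batt B b cst i) (fun m => cst (i + m)) n := by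
  intro n
  induction n with
  | zero => rfl
  | succ n ih =>
    show min (batt B b cst (i + n) - cst (i + n)) B = _
    rw [ih]; rfl

lemma batt_le_sub (B b : ℝ) (cst : ℕ → ℝ) :
    ∀ n, batt B b cst n ≤ b - ∑ m ∈ Finset.range n, cst m := by
  intro n
  induction n with
  | zero => simp [batt]
  | succ n ih =>
    rw [Finset.sum_range_succ]
    calc batt B b cst (n + 1) ≤ batt B b cst n - cst n := min_le_left _ _
      _ ≤ _ := by linarith

lemma shorten (B b : ℝ) (cst cst' : ℕ → ℝ) (i j k : ℕ) (hij : i < j) (hjk : j ≤ k)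
    (hS : 0 ≤ ∑ m ∈ Finset.range (j - i), cst (i + m))
    (h1 : ∀ m, m < i → cst' m = cst m)
    (h2 : ∀ m, i ≤ m → cst' m = cst (m + (j - i)))
    (ht : Trav B b cst k) :
    Trav B b cst' (k - (j - i)) ∧ batt B b cst k ≤ batt B b cst' (k - (j - i)) := by
  have hiΔ : i + (j - i) = j := by omega
  have hbi : ∀ n, n ≤ i → batt B b cst' n = batt B b cst n :=
    batt_congr B b (fun m hm => h1 m hm)
  have hji : batt B b cst j ≤ batt B b cst i := by
    have h1' := batt_le_sub B (batt B b cst i) (fun m => cst (i + m)) (j - i)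
    rw [← hiΔ, batt_shift]
    linarith
  have hkey : ∀ n, batt B b cst (j + n) ≤ batt B b cst' (i + n) := by
    intro n
    rw [batt_shift, batt_shift]
    have hfun : (fun m => cst' (i + m)) = fun m => cst (j + m) := by
      funext m
      rw [h2 (i + m) (by omega)]
      congr 1
      omega
    rw [hfun, hbi i le_rfl]
    exact batt_mono B _ hji n
  constructor
  · intro m hm
    by_cases hmi : m < i
    · rw [h1 m hmi, hbi m (le_of_lt hmi)]
      exact ht m (by omega)
    · push_neg at hmi
      calc cst' m = cst (m + (j - i)) := h2 m hmi
        _ ≤ batt B b cst (m + (j - i)) := ht _ (by omega)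
        _ = batt B b cst (j + (m - i)) := by congr 1; omega
        _ ≤ batt B b cst' (i + (m - i)) := hkey _
        _ = batt B b cst' m := by congr 1; omega
  · calc batt B b cst k = batt B b cst (j + (k - j)) := by congr 1; omega
      _ ≤ batt B b cst' (i + (k - j)) := hkey _
      _ = batt B b cst' (k - (j - i)) := by congr 1; omega

lemma exists_simple {V : Type*} (Arc : V → V → Prop) (c : V → V → ℝ)
    (hNC : NoNegCycles Arc c) (B : ℝ) :
    ∀ k : ℕ, ∀ u : ℕ → V, IsPath Arc u k → Trav B B (fun i => c (u i) (u (i + 1))) k →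
    ∃ (u' : ℕ → V) (k' : ℕ), IsPath Arc u' k' ∧ u' 0 = u 0 ∧ u' k' = u k ∧
      (∀ i ≤ k', ∀ j ≤ k', u' i = u' j → i = j) ∧
      Trav B B (fun i => c (u' i) (u' (i + 1))) k' ∧
      batt B B (fun i => c (u i) (u (i + 1))) k ≤
        batt B B (fun i => c (u' i) (u' (i + 1))) k' := by
  intro k
  induction k using Nat.strong_induction_on with
  | _ k IH =>
  intro u hp ht
  by_cases hinj : ∀ i ≤ k, ∀ j ≤ k, u i = u j → i = j
  · exact ⟨u, k, hp, rfl, rfl, hinj, ht, le_rfl⟩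
  · push_neg at hinj
    obtain ⟨i0, hi0, j0, hj0, heq0, hne0⟩ := hinj
    obtain ⟨i, j, hij, hjk, heq⟩ : ∃ i j, i < j ∧ j ≤ k ∧ u i = u j := by
      rcases lt_or_gt_of_ne hne0 with h | h
      · exact ⟨i0, j0, h, hj0, heq0⟩
      · exact ⟨j0, i0, h, hi0, heq0.symm⟩
    set u' : ℕ → V := fun m => if m < i then u m else u (m + (j - i)) with hu'
    have hu'a : ∀ m, m < i → u' m = u m := fun m hm => if_pos hm
    have hu'b : ∀ m, i ≤ m → u' m = u (m + (j - i)) := fun m hm => if_neg (by omega)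
    have hu'c : ∀ m, m ≤ i → u' m = u m := by
      intro m hm
      rcases lt_or_eq_of_le hm with h | h
      · exact hu'a m h
      · rw [hu'b m (le_of_eq h.symm), h]
        have : i + (j - i) = j := by omega
        rw [this, ← heq]
    have h1 : ∀ m, m < i → c (u' m) (u' (m + 1)) = c (u m) (u (m + 1)) := by
      intro m hm
      rw [hu'a m hm, hu'c (m + 1) (by omega)]
    have h2 : ∀ m, i ≤ m → c (u' m) (u' (m + 1)) = c (u (m + (j - i))) (u (m + (j - i) + 1)) := by
      intro m hm
      rw [hu'b m hm, hu'b (m + 1) (by omega)]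
      have : m + 1 + (j - i) = m + (j - i) + 1 := by omega
      rw [this]
    have hS : 0 ≤ ∑ m ∈ Finset.range (j - i), c (u (i + m)) (u (i + m + 1)) := by
      have hcyc : IsPath Arc (fun m => u (i + m)) (j - i) := by
        intro m hm
        exact hp (i + m) (by omega)
      have hcl : (fun m => u (i + m)) (j - i) = (fun m => u (i + m)) 0 := by
        simp only []
        have : i + (j - i) = j := by omega
        rw [this, Nat.add_zero, ← heq]
      exact hNC _ _ hcyc hcl (by omega)
    have hsh := shorten B B (fun m => c (u m) (u (m + 1))) (fun m => c (u' m) (u' (m + 1)))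
      i j k hij hjk hS h1 (fun m hm => h2 m hm) ht
    have hp' : IsPath Arc u' (k - (j - i)) := by
      intro m hm
      by_cases hmi : m < i
      · rw [hu'a m hmi, hu'c (m + 1) (by omega)]
        exact hp m (by omega)
      · push_neg at hmi
        rw [hu'b m hmi, hu'b (m + 1) (by omega)]
        have : m + 1 + (j - i) = m + (j - i) + 1 := by omega
        rw [this]
        exact hp (m + (j - i)) (by omega)
    obtain ⟨u'', k'', p1, p2, p3, p4, p5, p6⟩ := IH (k - (j - i)) (by omega) u' hp' hsh.1
    refine ⟨u'', k'', p1, ?_, ?_, p4, p5, hsh.2.trans p6⟩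
    · rw [p2, hu'c 0 (by omega)]
    · rw [p3, hu'b (k - (j - i)) (by omega)]
      congr 1
      omega

lemma dE_le_dE (B b : ℝ) {c1 c2 : ℕ → ℝ} {k1 k2 : ℕ} (h1 : Trav B b c1 k1)
    (hbatt : batt B b c2 k2 ≤ batt B b c1 k1) :
    dE B b c1 k1 ≤ dE B b c2 k2 := by
  unfold dE
  rw [if_pos h1]
  by_cases h2 : Trav B b c2 k2
  · rw [if_pos h2]
    exact EReal.coe_le_coe_iff.2 (by linarith)
  · rw [if_neg h2]
    exact le_top

/-- in a finite graph with no negative cycles, if `δ_B(s,t) < ∞` then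
the minimum is attained by a simple `s`–`t` path; in particular `δ_B(s,t)` equals the
minimum of `d_B(P')` over simple `s`–`t` paths `P'`. -/
theorem delta_attained_by_simple_path {V : Type*} [Fintype V] (Arc : V → V → Prop)
    (c : V → V → ℝ) (hNC : NoNegCycles Arc c) (B : ℝ) (hB : 0 < B) (s t : V)
    (hfin : deltaE Arc c B B s t < ⊤) :
    (∃ (u : ℕ → V) (k : ℕ), IsPath Arc u k ∧ u 0 = s ∧ u k = t ∧
      (∀ i ≤ k, ∀ j ≤ k, u i = u j → i = j) ∧
      dE B B (fun i => c (u i) (u (i + 1))) k = deltaE Arc c B B s t) ∧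
    deltaE Arc c B B s t =
      sInf { x : EReal | ∃ (u : ℕ → V) (k : ℕ), IsPath Arc u k ∧ u 0 = s ∧ u k = t ∧
        (∀ i ≤ k, ∀ j ≤ k, u i = u j → i = j) ∧
        x = dE B B (fun i => c (u i) (u (i + 1))) k } := by

  classical
  set Ssimp := { x : EReal | ∃ (u : ℕ → V) (k : ℕ), IsPath Arc u k ∧ u 0 = s ∧ u k = t ∧
        (∀ i ≤ k, ∀ j ≤ k, u i = u j → i = j) ∧
        x = dE B B (fun i => c (u i) (u (i + 1))) k } with hSsimp
  have hδ : deltaE Arc c B B s t = sInf { x : EReal | ∃ (u : ℕ → V) (k : ℕ),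
      IsPath Arc u k ∧ u 0 = s ∧ u k = t ∧
      x = dE B B (fun i => c (u i) (u (i + 1))) k } := rfl
  have hsub : Ssimp ⊆ { x : EReal | ∃ (u : ℕ → V) (k : ℕ),
      IsPath Arc u k ∧ u 0 = s ∧ u k = t ∧
      x = dE B B (fun i => c (u i) (u (i + 1))) k } := by
    rintro x ⟨u, k, a1, a2, a3, _, a5⟩
    exact ⟨u, k, a1, a2, a3, a5⟩
  have hge : deltaE Arc c B B s t ≤ sInf Ssimp := by
    rw [hδ]
    exact sInf_le_sInf hsub
  have hle : sInf Ssimp ≤ deltaE Arc c B B s t := by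
    rw [hδ]
    apply le_sInf
    rintro x ⟨u, k, a1, a2, a3, a5⟩
    by_cases htr : Trav B B (fun i => c (u i) (u (i + 1))) k
    · obtain ⟨u', k', p1, p2, p3, p4, p5, p6⟩ := exists_simple Arc c hNC B k u a1 htr
      have hmem : dE B B (fun i => c (u' i) (u' (i + 1))) k' ∈ Ssimp :=
        ⟨u', k', p1, p2.trans a2, p3.trans a3, p4, rfl⟩
      calc sInf Ssimp ≤ dE B B (fun i => c (u' i) (u' (i + 1))) k' := sInf_le hmem
        _ ≤ x := by rw [a5]; exact dE_le_dE B B p5 p6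
    · have : x = ⊤ := by rw [a5]; exact if_neg htr
      rw [this]
      exact le_top
  have heq : deltaE Arc c B B s t = sInf Ssimp := le_antisymm hge hle
  have hne : Ssimp.Nonempty := by
    by_contra hcon
    rw [Set.not_nonempty_iff_eq_empty] at hcon
    rw [heq, hcon, sInf_empty] at hfin
    exact absurd hfin (lt_irrefl _)
  have hNe : Nonempty V := ⟨s⟩
  have hN1 : 1 ≤ Fintype.card V := Fintype.card_pos
  have hfinS : Ssimp.Finite := by
    set N := Fintype.card V with hN
    have hsub2 : Ssimp ⊆ (fun p : (Fin N → V) × ℕ =>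
        dE B B (fun i => c (p.1 ⟨min i (N - 1), by omega⟩)
          (p.1 ⟨min (i + 1) (N - 1), by omega⟩)) p.2) ''
        (Set.univ ×ˢ Set.Iio N) := by
      rintro x ⟨u, k, a1, a2, a3, a4, a5⟩
      have hkN : k < N := by
        have hinj : Function.Injective (fun m : Fin (k + 1) => u m) := by
          intro a b hab
          exact Fin.ext (a4 a (by omega) b (by omega) hab)
        have := Fintype.card_le_of_injective _ hinj
        simp only [Fintype.card_fin] at this
        omega
      refine ⟨(fun a : Fin N => u (min a.val k), k), ⟨Set.mem_univ _, hkN⟩, ?_⟩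
      simp only []
      rw [a5]
      apply (dE_congr B B ?_).symm
      intro m hm
      have e1 : min (min m (N - 1)) k = m := by omega
      have e2 : min (min (m + 1) (N - 1)) k = m + 1 := by omega
      rw [e1, e2]
    exact Set.Finite.subset (Set.Finite.image _ (Set.finite_univ.prod (Set.finite_Iio N))) hsub2
  have hmem : sInf Ssimp ∈ Ssimp := Set.Nonempty.csInf_mem hne hfinS
  obtain ⟨u, k, a1, a2, a3, a4, a5⟩ := hmem
  exact ⟨⟨u, k, a1, a2, a3, a4, by rw [← a5, heq]⟩, heq⟩
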